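/- Let G be the join K₁ + G' of a single vertex with a graph G' on n-1 vertices, where G' is disconnected. Then n is a simple eigenvalue of the Laplacian L(G). -/

import Mathlib

open Matrix

/-- The join `G + H` of two disjoint graphs: all edges of `G` and `H`, together with all edges
between the two vertex sets. -/
def graphJoin {α β : Type*} (G : SimpleGraph α) (H : SimpleGraph β) : SimpleGraph (α ⊕ β) where
  Adj u v := match u, v with
    | Sum.inl u, Sum.inl v => G.Adj u v
    | Sum.inr u, Sum.inr v => H.Adj u v
    | Sum.inl _, Sum.inr _ => True
    | Sum.inr _, Sum.inl _ => True
  symm := ⟨fun u v => match u, v with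
    | Sum.inl _, Sum.inl _ => G.adj_symm
    | Sum.inr _, Sum.inr _ => H.adj_symm
    | Sum.inl _, Sum.inr _ => fun _ => trivial
    | Sum.inr _, Sum.inl _ => fun _ => trivial⟩
  loopless := ⟨fun u => match u with
    | Sum.inl u => G.loopless.irrefl u
    | Sum.inr u => H.loopless.irrefl u⟩

instance {α β : Type*} (G : SimpleGraph α) (H : SimpleGraph β)
    [DecidableRel G.Adj] [DecidableRel H.Adj] : DecidableRel (graphJoin G H).Adj :=
  fun u v => match u, v with
    | Sum.inl u, Sum.inl v => inferInstanceAs (Decidable (G.Adj u v))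
    | Sum.inr u, Sum.inr v => inferInstanceAs (Decidable (H.Adj u v))
    | Sum.inl _, Sum.inr _ => inferInstanceAs (Decidable True)
    | Sum.inr _, Sum.inl _ => inferInstanceAs (Decidable True)

open Finset in
lemma lap_apply' {V : Type*} [Fintype V] [DecidableEq V] (G : SimpleGraph V)
    [DecidableRel G.Adj] (x : V → ℝ) (i : V) :
    (G.lapMatrix ℝ *ᵥ x) i = ∑ j, if G.Adj i j then x i - x j else 0 := by
  rw [SimpleGraph.lapMatrix_mulVec_apply, SimpleGraph.degree_eq_sum_if_adj,
    Finset.sum_mul, SimpleGraph.neighborFinset_eq_filter, Finset.sum_filter,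
    ← Finset.sum_sub_distrib]
  refine Finset.sum_congr rfl fun j _ => ?_
  split_ifs <;> ring

/-- Let `G = K₁ + G'` be the join of a single vertex with a disconnected graph `G'` on `n - 1`
vertices. Then `n` (the total number of vertices) is a simple eigenvalue of the Laplacian
`L(G)`. -/
theorem join_K1_disconnected_top_eigenvalue_simple {V' : Type*} [Fintype V'] [DecidableEq V']
    [Nonempty V'] (G' : SimpleGraph V') [DecidableRel G'.Adj] (hdis : ¬G'.Connected) :
    ∃ f : Unit ⊕ V' → ℝ, f ≠ 0 ∧
      (graphJoin (⊥ : SimpleGraph Unit) G').lapMatrix ℝ *ᵥ f =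
        (Fintype.card (Unit ⊕ V') : ℝ) • f ∧
      ∀ g : Unit ⊕ V' → ℝ,
        (graphJoin (⊥ : SimpleGraph Unit) G').lapMatrix ℝ *ᵥ g =
          (Fintype.card (Unit ⊕ V') : ℝ) • g → ∃ c : ℝ, g = c • f := by

  classical
  set J := graphJoin (⊥ : SimpleGraph Unit) G' with hJ
  have hcard : (Fintype.card (Unit ⊕ V') : ℝ) = 1 + (Fintype.card V' : ℝ) := by
    simp [Fintype.card_sum]
  set m : ℝ := (Fintype.card V' : ℝ) with hm
  -- adjacency facts
  have hJrr : ∀ v w : V', J.Adj (Sum.inr v) (Sum.inr w) ↔ G'.Adj v w := fun v w => Iff.rfl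
  have hJlr : ∀ (u : Unit) (v : V'), J.Adj (Sum.inl u) (Sum.inr v) := fun _ _ => trivial
  have hJrl : ∀ (v : V') (u : Unit), J.Adj (Sum.inr v) (Sum.inl u) := fun _ _ => trivial
  have hJll : ∀ u u' : Unit, ¬ J.Adj (Sum.inl u) (Sum.inl u') := fun _ _ h => h.elim
  refine ⟨Sum.elim (fun _ => m) (fun _ => -1), ?_, ?_, ?_⟩
  · intro h
    have := congrFun h (Sum.inr (Classical.arbitrary V'))
    simp at this
  · ext i
    rw [lap_apply']
    cases i with
    | inl u =>
        rw [Fintype.sum_sum_type]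
        simp only [Sum.elim_inl, Sum.elim_inr, Pi.smul_apply, smul_eq_mul]
        rw [hcard]
        have h1 : ∀ u' : Unit, (if J.Adj (Sum.inl u) (Sum.inl u') then m - m else 0) = 0 := by
          intro u'; simp [hJll u u']
        have h2 : ∀ v : V', (if J.Adj (Sum.inl u) (Sum.inr v) then m - (-1) else 0) = m + 1 := by
          intro v; simp [hJlr u v]
        rw [Finset.sum_congr rfl (fun u' _ => h1 u'), Finset.sum_congr rfl (fun w _ => h2 w)]
        simp only [h1, h2, Finset.sum_const, Finset.card_univ, Fintype.card_unit,
          smul_eq_mul, nsmul_eq_mul]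
        rw [← hm]
        ring
    | inr v =>
        rw [Fintype.sum_sum_type]
        simp only [Sum.elim_inl, Sum.elim_inr, Pi.smul_apply, smul_eq_mul]
        rw [hcard]
        have h1 : ∀ u : Unit, (if J.Adj (Sum.inr v) (Sum.inl u) then -1 - m else 0) = -1 - m := by
          intro u; simp [hJrl v u]
        have h2 : ∀ w : V', (if J.Adj (Sum.inr v) (Sum.inr w) then (-1 : ℝ) - (-1) else 0) = 0 := by
          intro w; split_ifs <;> ring
        rw [Finset.sum_congr rfl (fun u _ => h1 u), Finset.sum_congr rfl (fun w _ => h2 w)]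
        simp only [h1, h2, Finset.sum_const, Finset.card_univ, Fintype.card_unit,
          smul_eq_mul, nsmul_eq_mul, Finset.sum_const_zero]
        ring
  · intro g hg
    obtain ⟨av, bv, hab⟩ : ∃ a b : V', ¬ G'.Reachable a b := by
      rw [SimpleGraph.connected_iff] at hdis
      push_neg at hdis
      have := hdis
      by_contra h
      push_neg at h
      exact not_isEmpty_of_nonempty V' (hdis (fun u v => h u v))
    set a : ℝ := g (Sum.inl ()) with ha
    have hsum : ∀ i, (∑ j, if J.Adj i j then g i - g j else 0) = (1 + m) * g i := by
      intro i
      rw [← lap_apply', hg, Pi.smul_apply, smul_eq_mul, hcard]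
    -- sum over V' of g
    set S : ℝ := ∑ v : V', g (Sum.inr v) with hS
    have hSa : S = -a := by
      have := hsum (Sum.inl ())
      rw [Fintype.sum_sum_type] at this
      have h1 : ∀ u' : Unit,
          (if J.Adj (Sum.inl ()) (Sum.inl u') then g (Sum.inl ()) - g (Sum.inl u') else 0) = 0 := by
        intro u'; simp [hJll]
      have h2 : ∀ w : V',
          (if J.Adj (Sum.inl ()) (Sum.inr w) then g (Sum.inl ()) - g (Sum.inr w) else 0)
            = a - g (Sum.inr w) := by
        intro w; simp [hJlr, ha]
      rw [Finset.sum_congr rfl (fun u _ => h1 u), Finset.sum_congr rfl (fun w _ => h2 w)] at this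
      simp only [Finset.sum_const_zero, zero_add, Finset.sum_sub_distrib, Finset.sum_const,
        Finset.card_univ, nsmul_eq_mul] at this
      rw [← hS, ← hm] at this
      linarith [this]
    -- kernel of complement Laplacian
    have hker : Matrix.toLin' ((Jᶜ).lapMatrix ℝ) g = 0 := by
      rw [Matrix.toLin'_apply]
      ext i
      rw [lap_apply']
      cases i with
      | inl u =>
          simp only [Pi.zero_apply]
          refine Finset.sum_eq_zero fun j _ => ?_
          rcases j with u' | w
          · have : u = u' := Subsingleton.elim u u'
            simp [SimpleGraph.compl_adj, this]
          · simp [SimpleGraph.compl_adj, hJlr u w]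
      | inr v =>
          simp only [Pi.zero_apply]
          have key : ∀ w : V',
              (if (Jᶜ).Adj (Sum.inr v) (Sum.inr w) then g (Sum.inr v) - g (Sum.inr w) else 0)
              = (g (Sum.inr v) - g (Sum.inr w))
                - (if J.Adj (Sum.inr v) (Sum.inr w) then g (Sum.inr v) - g (Sum.inr w) else 0) := by
            intro w
            by_cases hvw : v = w
            · subst hvw
              simp [SimpleGraph.compl_adj]
            · by_cases hA : G'.Adj v w
              · have : J.Adj (Sum.inr v) (Sum.inr w) := hA
                simp [SimpleGraph.compl_adj, this, hA]
              · have hnJ : ¬ J.Adj (Sum.inr v) (Sum.inr w) := fun h => hA h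
                have hc : (Jᶜ).Adj (Sum.inr v) (Sum.inr w) := by
                  rw [SimpleGraph.compl_adj]
                  exact ⟨fun h => hvw (Sum.inr.inj h), hnJ⟩
                simp [hc, hnJ]
          rw [Fintype.sum_sum_type]
          have h0 : ∀ u : Unit,
              (if (Jᶜ).Adj (Sum.inr v) (Sum.inl u) then g (Sum.inr v) - g (Sum.inl u) else 0)
                = 0 := by
            intro u; simp [SimpleGraph.compl_adj, hJrl v u]
          rw [Finset.sum_congr rfl (fun u _ => h0 u), Finset.sum_congr rfl (fun w _ => key w)]
          simp only [Finset.sum_const_zero, zero_add, Finset.sum_sub_distrib]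
          -- compute the J-part from hsum
          have hv := hsum (Sum.inr v)
          rw [Fintype.sum_sum_type] at hv
          have h1 : ∀ u : Unit,
              (if J.Adj (Sum.inr v) (Sum.inl u) then g (Sum.inr v) - g (Sum.inl u) else 0)
                = g (Sum.inr v) - a := by
            intro u; simp [hJrl v u, ha]
          rw [Finset.sum_congr rfl (fun u _ => h1 u)] at hv
          simp only [Finset.sum_const, Finset.card_univ, Fintype.card_unit, one_smul] at hv
          rw [Finset.sum_const, Finset.card_univ, nsmul_eq_mul, ← hm, ← hS]
          linarith [hv, hSa]
    have hconst := (SimpleGraph.lapMatrix_mulVec_eq_zero_iff_forall_reachable (G := Jᶜ)).mp (by rwa [Matrix.toLin'_apply] at hker)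
    -- reachability in complement between inr vertices
    have hadj : ∀ v w : V', ¬ G'.Reachable v w → (Jᶜ).Adj (Sum.inr v) (Sum.inr w) := by
      intro v w hr
      rw [SimpleGraph.compl_adj]
      refine ⟨fun h => hr (by rw [Sum.inr.inj h]), fun h => hr (SimpleGraph.Adj.reachable h)⟩
    have hreach : ∀ v w : V', (Jᶜ).Reachable (Sum.inr v) (Sum.inr w) := by
      intro v w
      by_cases hr : G'.Reachable v w
      · by_cases hav : G'.Reachable av v
        · have h1 : ¬ G'.Reachable v bv := fun h => hab (hav.trans h)
          have h2 : ¬ G'.Reachable bv w := fun h => hab ((hav.trans hr).trans h.symm)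
          exact (hadj v bv h1).reachable.trans (hadj bv w h2).reachable
        · have h1 : ¬ G'.Reachable v av := fun h => hav h.symm
          have h2 : ¬ G'.Reachable av w := fun h => hav (h.trans hr.symm)
          exact (hadj v av h1).reachable.trans (hadj av w h2).reachable
      · exact (hadj v w hr).reachable
    set v0 : V' := Classical.arbitrary V' with hv0
    set c0 : ℝ := g (Sum.inr v0) with hc0
    have hgc : ∀ v : V', g (Sum.inr v) = c0 := fun v => hconst _ _ (hreach v v0)
    have hSc : S = m * c0 := by
      rw [hS]
      simp only [hgc]
      rw [Finset.sum_const, Finset.card_univ, nsmul_eq_mul, hm]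
    have hac : a = -(m * c0) := by linarith [hSa, hSc]
    refine ⟨-c0, ?_⟩
    ext i
    rcases i with u | v
    · have : g (Sum.inl u) = a := by rw [ha]
      simp only [Pi.smul_apply, Sum.elim_inl, smul_eq_mul, this, hac]
      ring
    · simp only [Pi.smul_apply, Sum.elim_inr, smul_eq_mul, hgc v]
      ring
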